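/- Let (R_w, m_w) be local rings and (R, m) their ultraproduct with respect to an ultrafilter 𝒰 on the infinite set W, and let n be a natural number. Then the maximal ideal m of R can be generated by at most n elements if and only if for almost all w the maximal ideal m_w of R_w can be generated by at most n elements. -/

import Mathlib

/-- The ideal of the product ring consisting of families that vanish almost
everywhere with respect to the ultrafilter `𝒰`. -/
def almostZero {W : Type*} (𝒰 : Ultrafilter W) (R : W → Type*) [∀ w, CommRing (R w)] :
    Ideal (∀ w, R w) where
  carrier := {f | ∀ᶠ w in (𝒰 : Filter W), f w = 0}
  zero_mem' := Filter.Eventually.of_forall fun _ => rfl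
  add_mem' := by
    intro f g hf hg
    filter_upwards [hf, hg] with w h1 h2
    simp [h1, h2]
  smul_mem' := by
    intro c f hf
    filter_upwards [hf] with w h
    simp [h]

/-- The ultraproduct of a family of commutative rings with respect to an
ultrafilter: the product modulo the ideal of almost-everywhere-zero families. -/
abbrev Ultraproduct {W : Type*} (𝒰 : Ultrafilter W) (R : W → Type*) [∀ w, CommRing (R w)] :
    Type _ :=
  (∀ w, R w) ⧸ almostZero 𝒰 R

theorem isUnit_mk_iff {W : Type*} (𝒰 : Ultrafilter W) (R : W → Type*) [∀ w, CommRing (R w)]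
    (f : ∀ w, R w) :
    IsUnit (Ideal.Quotient.mk (almostZero 𝒰 R) f) ↔ ∀ᶠ w in (𝒰 : Filter W), IsUnit (f w) := by
  constructor
  · rintro ⟨u, hu⟩
    obtain ⟨g, hg⟩ := Ideal.Quotient.mk_surjective (↑u⁻¹ : Ultraproduct 𝒰 R)
    have h1 : Ideal.Quotient.mk (almostZero 𝒰 R) (f * g) =
        Ideal.Quotient.mk (almostZero 𝒰 R) 1 := by
      rw [map_mul, map_one, hg, ← hu, Units.mul_inv]
    have h2 : f * g - 1 ∈ almostZero 𝒰 R := Ideal.Quotient.eq.mp h1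
    filter_upwards [h2] with w hw
    have : f w * g w = 1 := by
      have : f w * g w - 1 = 0 := hw
      linear_combination this
    exact IsUnit.of_mul_eq_one _ this
  · intro hf
    classical
    set g : ∀ w, R w := fun w => if h : IsUnit (f w) then ((h.unit⁻¹ : (R w)ˣ) : R w) else 0
      with hgdef
    have h1 : f * g - 1 ∈ almostZero 𝒰 R := by
      filter_upwards [hf] with w hw
      have : f w * g w = 1 := by
        simp only [hgdef, dif_pos hw]
        exact hw.mul_val_inv
      show f w * g w - 1 = 0
      rw [this, sub_self]
    have h2 : Ideal.Quotient.mk (almostZero 𝒰 R) f *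
        Ideal.Quotient.mk (almostZero 𝒰 R) g = 1 := by
      rw [← map_mul, ← map_one (Ideal.Quotient.mk (almostZero 𝒰 R))]
      exact Ideal.Quotient.eq.mpr h1
    exact IsUnit.of_mul_eq_one _ h2

instance {W : Type*} (𝒰 : Ultrafilter W) (R : W → Type*) [∀ w, CommRing (R w)]
    [∀ w, Nontrivial (R w)] : Nontrivial (Ultraproduct 𝒰 R) := by
  refine ⟨0, 1, fun h => ?_⟩
  have h1 : (0 : ∀ w, R w) - 1 ∈ almostZero 𝒰 R := Ideal.Quotient.eq.mp h
  have h2 : ∀ᶠ w in (𝒰 : Filter W), (0 : R w) - 1 = 0 := h1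
  obtain ⟨w, hw⟩ := h2.exists
  exact one_ne_zero (by linear_combination -hw)

instance {W : Type*} (𝒰 : Ultrafilter W) (R : W → Type*) [∀ w, CommRing (R w)]
    [∀ w, IsLocalRing (R w)] : IsLocalRing (Ultraproduct 𝒰 R) := by
  refine IsLocalRing.of_nonunits_add ?_
  intro a b ha hb
  obtain ⟨f, rfl⟩ := Ideal.Quotient.mk_surjective a
  obtain ⟨g, rfl⟩ := Ideal.Quotient.mk_surjective b
  rw [mem_nonunits_iff, isUnit_mk_iff, ← Ultrafilter.eventually_not] at ha hb
  rw [mem_nonunits_iff, ← map_add, isUnit_mk_iff, ← Ultrafilter.eventually_not]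
  filter_upwards [ha, hb] with w h1 h2
  exact fun h => (IsLocalRing.nonunits_add h1 h2) h

/-- The ideal of infinitesimals of a local ring: the intersection of all powers
of the maximal ideal. -/
def infinitesimals (A : Type*) [CommRing A] [IsLocalRing A] : Ideal A :=
  ⨅ n : ℕ, IsLocalRing.maximalIdeal A ^ (n + 1)

theorem mem_maximalIdeal_mk_iff {W : Type*} (𝒰 : Ultrafilter W) (R : W → Type*)
    [∀ w, CommRing (R w)] [∀ w, IsLocalRing (R w)] (f : ∀ w, R w) :
    Ideal.Quotient.mk (almostZero 𝒰 R) f ∈ IsLocalRing.maximalIdeal (Ultraproduct 𝒰 R) ↔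
      ∀ᶠ w in (𝒰 : Filter W), f w ∈ IsLocalRing.maximalIdeal (R w) := by
  simp only [IsLocalRing.mem_maximalIdeal, mem_nonunits_iff]
  rw [isUnit_mk_iff, Ultrafilter.eventually_not]

/-- The maximal ideal of an ultraproduct of local rings is generated by at most
`n` elements iff almost all the maximal ideals of the components are. -/
theorem stmt_18 {W : Type*} [Infinite W] (𝒰 : Ultrafilter W) (R : W → Type*)
    [∀ w, CommRing (R w)] [∀ w, IsLocalRing (R w)] (n : ℕ) :
    (∃ x : Fin n → Ultraproduct 𝒰 R,
        Ideal.span (Set.range x) = IsLocalRing.maximalIdeal (Ultraproduct 𝒰 R)) ↔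
      ∀ᶠ w in (𝒰 : Filter W), ∃ x : Fin n → R w,
        Ideal.span (Set.range x) = IsLocalRing.maximalIdeal (R w) := by
  classical
  constructor
  · rintro ⟨x, hx⟩
    choose f hf using fun i => Ideal.Quotient.mk_surjective (x i)
    -- each f i w is in the maximal ideal for a.e. w
    have hfm : ∀ i, ∀ᶠ w in (𝒰 : Filter W), f i w ∈ IsLocalRing.maximalIdeal (R w) := by
      intro i
      rw [← mem_maximalIdeal_mk_iff 𝒰 R (f i)]
      rw [hf i, ← hx]
      exact Ideal.subset_span ⟨i, rfl⟩
    have hT : ∀ᶠ w in (𝒰 : Filter W), ∀ i, f i w ∈ IsLocalRing.maximalIdeal (R w) :=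
      Filter.eventually_all.mpr hfm
    by_contra hbad
    rw [← Ultrafilter.eventually_not] at hbad
    -- on the bad set, the span is strictly smaller than the maximal ideal
    have hss : ∀ᶠ w in (𝒰 : Filter W),
        Ideal.span (Set.range fun i => f i w) < IsLocalRing.maximalIdeal (R w) := by
      filter_upwards [hT, hbad] with w h1 h2
      refine lt_of_le_of_ne ?_ ?_
      · rw [Ideal.span_le]
        rintro _ ⟨i, rfl⟩
        exact h1 i
      · intro h
        exact h2 ⟨fun i => f i w, h⟩
    -- choose a witness g w in m_w not in the span
    have hchoice : ∀ w, ∃ g : R w, g ∈ IsLocalRing.maximalIdeal (R w) ∧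
        (¬ Ideal.span (Set.range fun i => f i w) < IsLocalRing.maximalIdeal (R w) ∨
          g ∉ Ideal.span (Set.range fun i => f i w)) := by
      intro w
      by_cases h : Ideal.span (Set.range fun i => f i w) < IsLocalRing.maximalIdeal (R w)
      · obtain ⟨g, hg1, hg2⟩ := SetLike.exists_of_lt h
        exact ⟨g, hg1, Or.inr hg2⟩
      · exact ⟨0, Ideal.zero_mem _, Or.inl h⟩
    choose g hg1 hg2 using hchoice
    have hgm : Ideal.Quotient.mk (almostZero 𝒰 R) g ∈
        IsLocalRing.maximalIdeal (Ultraproduct 𝒰 R) :=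
      (mem_maximalIdeal_mk_iff 𝒰 R g).mpr (Filter.Eventually.of_forall hg1)
    rw [← hx, ← Ideal.submodule_span_eq, Submodule.mem_span_range_iff_exists_fun] at hgm
    obtain ⟨c, hc⟩ := hgm
    simp only [smul_eq_mul] at hc
    choose c' hc'' using fun i => Ideal.Quotient.mk_surjective (c i)
    have hz : (∑ i, c' i * f i) - g ∈ almostZero 𝒰 R := by
      rw [← Ideal.Quotient.eq]
      rw [map_sum]
      simp only [map_mul, hc'', hf]
      exact hc
    have : ∀ᶠ w in (𝒰 : Filter W),
        g w ∈ Ideal.span (Set.range fun i => f i w) := by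
      filter_upwards [hz] with w hw
      have hw' : (∑ i, c' i w * f i w) - g w = 0 := by
        simpa using hw
      have : g w = ∑ i, c' i w * f i w := by linear_combination -hw'
      rw [this]
      exact Ideal.sum_mem _ fun i _ =>
        Ideal.mul_mem_left _ _ (Ideal.subset_span ⟨i, rfl⟩)
    obtain ⟨w, hw1, hw2⟩ := (this.and hss).exists
    rcases hg2 w with h | h
    · exact h hw2
    · exact h hw1
  · intro h
    set f : Fin n → ∀ w, R w := fun i w =>
      if hw : ∃ y : Fin n → R w, Ideal.span (Set.range y) = IsLocalRing.maximalIdeal (R w)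
      then hw.choose i else 0 with hfdef
    have hgood : ∀ᶠ w in (𝒰 : Filter W),
        Ideal.span (Set.range fun i => f i w) = IsLocalRing.maximalIdeal (R w) := by
      filter_upwards [h] with w hw
      have : (fun i => f i w) = hw.choose := by
        funext i
        simp [hfdef, dif_pos hw]
      rw [this, hw.choose_spec]
    refine ⟨fun i => Ideal.Quotient.mk (almostZero 𝒰 R) (f i), ?_⟩
    apply le_antisymm
    · rw [Ideal.span_le]
      rintro _ ⟨i, rfl⟩
      rw [SetLike.mem_coe, mem_maximalIdeal_mk_iff]
      filter_upwards [hgood] with w hw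
      rw [← hw]
      exact Ideal.subset_span ⟨i, rfl⟩
    · intro a ha
      obtain ⟨g, rfl⟩ := Ideal.Quotient.mk_surjective a
      rw [mem_maximalIdeal_mk_iff] at ha
      have hmem : ∀ᶠ w in (𝒰 : Filter W),
          g w ∈ Ideal.span (Set.range fun i => f i w) := by
        filter_upwards [ha, hgood] with w h1 h2
        rw [h2]; exact h1
      have hchoice : ∀ w, ∃ c : Fin n → R w,
          (g w ∈ Ideal.span (Set.range fun i => f i w) →
            ∑ i, c i * f i w = g w) := by
        intro w
        by_cases hw : g w ∈ Ideal.span (Set.range fun i => f i w)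
        · rw [← Ideal.submodule_span_eq, Submodule.mem_span_range_iff_exists_fun] at hw
          obtain ⟨c, hc⟩ := hw
          exact ⟨c, fun _ => by simpa [smul_eq_mul] using hc⟩
        · exact ⟨0, fun h' => absurd h' hw⟩
      choose c hc using hchoice
      have hz : (∑ i, (fun w => c w i) * f i) - g ∈ almostZero 𝒰 R := by
        filter_upwards [hmem] with w hw
        have := hc w hw
        simp only [Pi.sub_apply, Finset.sum_apply, Pi.mul_apply]
        rw [this, sub_self]
      have : Ideal.Quotient.mk (almostZero 𝒰 R) g =
          ∑ i, Ideal.Quotient.mk (almostZero 𝒰 R) (fun w => c w i) *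
            Ideal.Quotient.mk (almostZero 𝒰 R) (f i) := by
        rw [← Ideal.Quotient.eq] at *
        simp only [map_sum, map_mul] at hz ⊢
        rw [← hz]
      rw [this]
      exact Ideal.sum_mem _ fun i _ =>
        Ideal.mul_mem_left _ _ (Ideal.subset_span ⟨i, rfl⟩)
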